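/- Completeness of Mp for formulas: every valid formula (tautology) is derivable as a singleton sequent in the system Mp. -/

import Mathlib

/-- Propositional formulas in negation normal form. -/
inductive Fm : Type
  | pos : ℕ → Fm
  | neg : ℕ → Fm
  | conj : Fm → Fm → Fm
  | disj : Fm → Fm → Fm
  deriving DecidableEq

/-- Boolean evaluation of a formula under a valuation. -/
def Fm.eval (v : ℕ → Bool) : Fm → Bool
  | .pos p => v p
  | .neg p => !(v p)
  | .conj a b => a.eval v && b.eval v
  | .disj a b => a.eval v || b.eval v

/-- A sequent (nonempty multiset of formulas) is valid if under every
valuation some member is true (i.e. the disjunction is a tautology). -/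
def Valid (Γ : Multiset Fm) : Prop :=
  Γ ≠ 0 ∧ ∀ v : ℕ → Bool, ∃ A ∈ Γ, Fm.eval v A = true

/-- A sequent is minimal if it is valid and no proper sub-multiset is valid. -/
def MinimalSeq (Γ : Multiset Fm) : Prop :=
  Valid Γ ∧ ∀ Δ : Multiset Fm, Δ < Γ → ¬ Valid Δ

/-- Derivability in minimal sequent calculus Mp. -/
inductive Mp : Multiset Fm → Prop
  | ax (P : ℕ) : Mp {Fm.pos P, Fm.neg P}
  | blend {Γ Δ S : Multiset Fm} {A B : Fm} :
      Mp (Γ + Δ + {A}) → Mp (Γ + S + {B}) → Mp (Γ + Δ + S + {Fm.conj A B})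
  | par {Γ : Multiset Fm} {A B : Fm} :
      Mp (Γ + {A, B}) → Mp (Γ + {Fm.disj A B})
  | plus1 {Γ : Multiset Fm} {A B : Fm} :
      Mp (Γ + {A}) → Mp (Γ + {Fm.disj A B})
  | plus2 {Γ : Multiset Fm} {A B : Fm} :
      Mp (Γ + {B}) → Mp (Γ + {Fm.disj A B})

/-! ### Auxiliary machinery -/

def fwt : Fm → ℕ
  | .pos _ => 1
  | .neg _ => 1
  | .conj a b => fwt a + fwt b + 1
  | .disj a b => fwt a + fwt b + 1

lemma fwt_pos (a : Fm) : 0 < fwt a := by cases a <;> simp [fwt]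

def W (Γ : Multiset Fm) : ℕ := (Γ.map fwt).sum

lemma W_add (s t : Multiset Fm) : W (s + t) = W s + W t := by
  simp [W]

lemma W_singleton (a : Fm) : W ({a} : Multiset Fm) = fwt a := by simp [W]

lemma W_mono {s t : Multiset Fm} (h : s ≤ t) : W s ≤ W t := by
  obtain ⟨u, rfl⟩ := Multiset.le_iff_exists_add.mp h
  simp [W_add]

lemma lt_add_singleton (s : Multiset Fm) (a : Fm) : s < s + {a} := by
  refine lt_iff_le_and_ne.mpr ⟨Multiset.le_add_right _ _, ?_⟩
  intro hcontra
  have := congrArg Multiset.card hcontra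
  simp at this

lemma eq_of_minimal {Γ Δ : Multiset Fm} (hmin : MinimalSeq Γ) (hval : Valid Δ)
    (hle : Δ ≤ Γ) : Δ = Γ := by
  by_contra hne
  exact hmin.2 Δ (lt_of_le_of_ne hle hne) hval

lemma exists_minimal_le : ∀ Γ : Multiset Fm, Valid Γ → ∃ Δ, Δ ≤ Γ ∧ MinimalSeq Δ := by
  intro Γ
  induction Γ using Multiset.strongInductionOn with
  | _ Γ ih =>
    intro hval
    by_cases hmin : ∀ Δ : Multiset Fm, Δ < Γ → ¬ Valid Δ
    · exact ⟨Γ, le_rfl, hval, hmin⟩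
    · push_neg at hmin
      obtain ⟨Δ, hlt, hΔ⟩ := hmin
      obtain ⟨Δ', hle, hmin'⟩ := ih Δ hlt hΔ
      exact ⟨Δ', hle.trans hlt.le, hmin'⟩

lemma split_le {Δ Γ S : Multiset Fm} (h : Δ ≤ Γ + S) :
    ∃ Δ₁ Δ₂, Δ₁ ≤ Γ ∧ Δ₂ ≤ S ∧ Δ = Δ₁ + Δ₂ := by
  refine ⟨Δ ∩ Γ, Δ - Γ, Multiset.inter_le_right, ?_, ?_⟩
  · rw [Multiset.le_iff_count] at h ⊢
    intro a
    have := h a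
    simp only [Multiset.count_sub, Multiset.count_add] at *
    omega
  · ext a
    simp only [Multiset.count_inter, Multiset.count_sub, Multiset.count_add]
    omega

lemma le_pair {s : Multiset Fm} {a b : Fm} (h : s ≤ ({a, b} : Multiset Fm)) :
    s = 0 ∨ s = {a} ∨ s = {b} ∨ s = {a, b} := by
  obtain ⟨u, hu⟩ := Multiset.le_iff_exists_add.mp h
  have hcard : Multiset.card s + Multiset.card u = 2 := by
    have := congrArg Multiset.card hu
    simpa using this.symm
  have h02 : Multiset.card s = 0 ∨ Multiset.card s = 1 ∨ Multiset.card s = 2 := by omega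
  rcases h02 with hs | hs | hs
  · exact Or.inl (Multiset.card_eq_zero.mp hs)
  · obtain ⟨c, rfl⟩ := Multiset.card_eq_one.mp hs
    have hc : c ∈ ({a, b} : Multiset Fm) := Multiset.mem_of_le h (by simp)
    simp only [Multiset.insert_eq_cons, Multiset.mem_cons, Multiset.mem_singleton] at hc
    rcases hc with rfl | rfl
    · exact Or.inr (Or.inl rfl)
    · exact Or.inr (Or.inr (Or.inl rfl))
  · have : Multiset.card u = 0 := by omega
    rw [Multiset.card_eq_zero] at this
    subst this
    rw [add_zero] at hu
    exact Or.inr (Or.inr (Or.inr hu.symm))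

lemma valid_add_singleton {Δ : Multiset Fm} {a : Fm} (h : ∀ v : ℕ → Bool,
    ∃ C ∈ Δ + ({a} : Multiset Fm), Fm.eval v C = true) : Valid (Δ + {a}) :=
  ⟨by simp, h⟩

lemma mem_add_singleton {Δ : Multiset Fm} {a C : Fm} (h : C ∈ Δ + ({a} : Multiset Fm)) :
    C ∈ Δ ∨ C = a := by
  rcases Multiset.mem_add.mp h with h | h
  · exact Or.inl h
  · exact Or.inr (Multiset.mem_singleton.mp h)

lemma valid_disj_left {Δ : Multiset Fm} {A B : Fm} (h : Valid (Δ + {A})) :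
    Valid (Δ + {Fm.disj A B}) := by
  refine valid_add_singleton fun v => ?_
  obtain ⟨C, hC, he⟩ := h.2 v
  rcases mem_add_singleton hC with hC | rfl
  · exact ⟨C, by simp [hC], he⟩
  · exact ⟨Fm.disj C B, by simp, by simp [Fm.eval, he]⟩

lemma valid_disj_right {Δ : Multiset Fm} {A B : Fm} (h : Valid (Δ + {B})) :
    Valid (Δ + {Fm.disj A B}) := by
  refine valid_add_singleton fun v => ?_
  obtain ⟨C, hC, he⟩ := h.2 v
  rcases mem_add_singleton hC with hC | rfl
  · exact ⟨C, by simp [hC], he⟩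
  · exact ⟨Fm.disj A C, by simp, by simp [Fm.eval, he]⟩

lemma valid_disj_pair {Δ : Multiset Fm} {A B : Fm} (h : Valid (Δ + {A, B})) :
    Valid (Δ + {Fm.disj A B}) := by
  refine valid_add_singleton fun v => ?_
  obtain ⟨C, hC, he⟩ := h.2 v
  rcases Multiset.mem_add.mp hC with hC | hC
  · exact ⟨C, by simp [hC], he⟩
  · simp only [Multiset.insert_eq_cons, Multiset.mem_cons, Multiset.mem_singleton] at hC
    rcases hC with rfl | rfl
    · exact ⟨Fm.disj C B, by simp, by simp [Fm.eval, he]⟩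
    · exact ⟨Fm.disj A C, by simp, by simp [Fm.eval, he]⟩

lemma valid_conj {Δ₁ Δ₂ U : Multiset Fm} {A B : Fm}
    (h₁ : Valid (Δ₁ + {A})) (h₂ : Valid (Δ₂ + {B}))
    (l₁ : Δ₁ ≤ U) (l₂ : Δ₂ ≤ U) : Valid (U + {Fm.conj A B}) := by
  refine valid_add_singleton fun v => ?_
  by_cases hA : Fm.eval v A = true
  · by_cases hB : Fm.eval v B = true
    · exact ⟨Fm.conj A B, by simp, by simp [Fm.eval, hA, hB]⟩
    · obtain ⟨C, hC, he⟩ := h₂.2 v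
      rcases mem_add_singleton hC with hC | rfl
      · exact ⟨C, by simp [Multiset.mem_of_le l₂ hC], he⟩
      · exact absurd he hB
  · obtain ⟨C, hC, he⟩ := h₁.2 v
    rcases mem_add_singleton hC with hC | rfl
    · exact ⟨C, by simp [Multiset.mem_of_le l₁ hC], he⟩
    · exact absurd he hA

/-- Completeness for minimal sequents. -/
lemma mp_of_minimal : ∀ n, ∀ Γ : Multiset Fm, W Γ ≤ n → MinimalSeq Γ → Mp Γ := by
  intro n
  induction n using Nat.strong_induction_on with
  | _ n ih =>
    intro Γ hW hmin
    by_cases hconj : ∃ A B : Fm, Fm.conj A B ∈ Γ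
    · -- conjunction case
      obtain ⟨A, B, hmem⟩ := hconj
      set Γ' := Γ.erase (Fm.conj A B) with hΓ'
      have hΓ : Γ = Γ' + {Fm.conj A B} := by
        rw [add_comm, Multiset.singleton_add, hΓ', Multiset.cons_erase hmem]
      have hΓlt : Γ' < Γ := hΓ ▸ lt_add_singleton Γ' (Fm.conj A B)
      have hvalA : Valid (Γ' + {A}) := by
        refine valid_add_singleton fun v => ?_
        obtain ⟨C, hC, he⟩ := hmin.1.2 v
        rw [hΓ] at hC
        rcases mem_add_singleton hC with hC | rfl
        · exact ⟨C, by simp [hC], he⟩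
        · simp only [Fm.eval, Bool.and_eq_true] at he
          exact ⟨A, by simp, he.1⟩
      have hvalB : Valid (Γ' + {B}) := by
        refine valid_add_singleton fun v => ?_
        obtain ⟨C, hC, he⟩ := hmin.1.2 v
        rw [hΓ] at hC
        rcases mem_add_singleton hC with hC | rfl
        · exact ⟨C, by simp [hC], he⟩
        · simp only [Fm.eval, Bool.and_eq_true] at he
          exact ⟨B, by simp, he.2⟩
      obtain ⟨ΔA, hleA, hminA⟩ := exists_minimal_le _ hvalA
      obtain ⟨ΔB, hleB, hminB⟩ := exists_minimal_le _ hvalB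
      obtain ⟨Δ₁, X₁, hΔ₁, hX₁, rfl⟩ := split_le hleA
      obtain ⟨Δ₂, X₂, hΔ₂, hX₂, rfl⟩ := split_le hleB
      rcases Multiset.le_singleton.mp hX₁ with rfl | rfl
      · rw [add_zero] at hminA
        exact absurd hminA.1 (hmin.2 Δ₁ (lt_of_le_of_lt hΔ₁ hΓlt))
      rcases Multiset.le_singleton.mp hX₂ with rfl | rfl
      · rw [add_zero] at hminB
        exact absurd hminB.1 (hmin.2 Δ₂ (lt_of_le_of_lt hΔ₂ hΓlt))
      -- both contain the new formula
      have hWA : W (Δ₁ + {A}) < n := by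
        have h1 : W (Δ₁ + {A}) = W Δ₁ + fwt A := by rw [W_add, W_singleton]
        have h2 : W Γ = W Γ' + (fwt A + fwt B + 1) := by
          rw [hΓ, W_add, W_singleton]; rfl
        have := W_mono hΔ₁
        have := fwt_pos B
        omega
      have hWB : W (Δ₂ + {B}) < n := by
        have h1 : W (Δ₂ + {B}) = W Δ₂ + fwt B := by rw [W_add, W_singleton]
        have h2 : W Γ = W Γ' + (fwt A + fwt B + 1) := by
          rw [hΓ, W_add, W_singleton]; rfl
        have := W_mono hΔ₂
        have := fwt_pos A
        omega
      have dA : Mp (Δ₁ + {A}) := ih _ hWA _ le_rfl hminA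
      have dB : Mp (Δ₂ + {B}) := ih _ hWB _ le_rfl hminB
      set G := Δ₁ ∩ Δ₂ with hG
      have e1 : G + (Δ₁ - G) = Δ₁ := by
        ext a; simp only [hG, Multiset.count_add, Multiset.count_sub, Multiset.count_inter]
        omega
      have e2 : G + (Δ₂ - G) = Δ₂ := by
        ext a; simp only [hG, Multiset.count_add, Multiset.count_sub, Multiset.count_inter]
        omega
      have dA' : Mp (G + (Δ₁ - G) + {A}) := by rw [e1]; exact dA
      have dB' : Mp (G + (Δ₂ - G) + {B}) := by rw [e2]; exact dB
      have result : Mp (G + (Δ₁ - G) + (Δ₂ - G) + {Fm.conj A B}) := Mp.blend dA' dB'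
      set U := G + (Δ₁ - G) + (Δ₂ - G) with hU
      have hU1 : Δ₁ ≤ U := by rw [hU, e1]; exact Multiset.le_add_right _ _
      have hU2 : Δ₂ ≤ U := by
        rw [Multiset.le_iff_count]; intro a
        simp only [hU, hG, Multiset.count_add, Multiset.count_sub, Multiset.count_inter]
        omega
      have hUle : U ≤ Γ' := by
        rw [Multiset.le_iff_count]; intro a
        have h1 := Multiset.le_iff_count.mp hΔ₁ a
        have h2 := Multiset.le_iff_count.mp hΔ₂ a
        simp only [hU, hG, Multiset.count_add, Multiset.count_sub, Multiset.count_inter] at *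
        omega
      have hvalU : Valid (U + {Fm.conj A B}) := valid_conj hminA.1 hminB.1 hU1 hU2
      have heq : U + {Fm.conj A B} = Γ := by
        apply eq_of_minimal hmin hvalU
        rw [hΓ]
        exact add_le_add_left hUle _
      rw [← heq]; exact result
    by_cases hdisj : ∃ A B : Fm, Fm.disj A B ∈ Γ
    · -- disjunction case
      obtain ⟨A, B, hmem⟩ := hdisj
      set Γ' := Γ.erase (Fm.disj A B) with hΓ'
      have hΓ : Γ = Γ' + {Fm.disj A B} := by
        rw [add_comm, Multiset.singleton_add, hΓ', Multiset.cons_erase hmem]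
      have hΓlt : Γ' < Γ := hΓ ▸ lt_add_singleton Γ' (Fm.disj A B)
      have hvalAB : Valid (Γ' + {A, B}) := by
        refine ⟨by simp, fun v => ?_⟩
        obtain ⟨C, hC, he⟩ := hmin.1.2 v
        rw [hΓ] at hC
        rcases mem_add_singleton hC with hC | rfl
        · exact ⟨C, by simp [hC], he⟩
        · simp only [Fm.eval, Bool.or_eq_true] at he
          rcases he with he | he
          · exact ⟨A, by simp, he⟩
          · exact ⟨B, by simp, he⟩
      obtain ⟨Δ, hle, hminΔ⟩ := exists_minimal_le _ hvalAB
      obtain ⟨Δ₁, X, hΔ₁, hX, rfl⟩ := split_le hle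
      have hwt : W Δ₁ ≤ W Γ' := W_mono hΔ₁
      have h2 : W Γ = W Γ' + (fwt A + fwt B + 1) := by
        rw [hΓ, W_add, W_singleton]; rfl
      have key : ∀ Y : Multiset Fm, W (Δ₁ + Y) ≤ W Γ' + W Y := by
        intro Y; rw [W_add]; omega
      rcases le_pair hX with rfl | rfl | rfl | rfl
      · rw [add_zero] at hminΔ
        exact absurd hminΔ.1 (hmin.2 Δ₁ (lt_of_le_of_lt hΔ₁ hΓlt))
      · have hWlt : W (Δ₁ + {A}) < n := by
          have := key {A}; rw [W_singleton] at this
          have := fwt_pos B; omega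
        have d : Mp (Δ₁ + {A}) := ih _ hWlt _ le_rfl hminΔ
        have d' : Mp (Δ₁ + {Fm.disj A B}) := Mp.plus1 d
        have hval' : Valid (Δ₁ + {Fm.disj A B}) := valid_disj_left hminΔ.1
        have heq : Δ₁ + {Fm.disj A B} = Γ := by
          apply eq_of_minimal hmin hval'
          rw [hΓ]; exact add_le_add_left hΔ₁ _
        rw [← heq]; exact d'
      · have hWlt : W (Δ₁ + {B}) < n := by
          have := key {B}; rw [W_singleton] at this
          have := fwt_pos A; omega
        have d : Mp (Δ₁ + {B}) := ih _ hWlt _ le_rfl hminΔ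
        have d' : Mp (Δ₁ + {Fm.disj A B}) := Mp.plus2 d
        have hval' : Valid (Δ₁ + {Fm.disj A B}) := valid_disj_right hminΔ.1
        have heq : Δ₁ + {Fm.disj A B} = Γ := by
          apply eq_of_minimal hmin hval'
          rw [hΓ]; exact add_le_add_left hΔ₁ _
        rw [← heq]; exact d'
      · have hWlt : W (Δ₁ + {A, B}) < n := by
          have := key {A, B}
          have hWAB : W ({A, B} : Multiset Fm) = fwt A + fwt B := by
            simp [W, Multiset.insert_eq_cons]
          omega
        have d : Mp (Δ₁ + {A, B}) := ih _ hWlt _ le_rfl hminΔ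
        have d' : Mp (Δ₁ + {Fm.disj A B}) := Mp.par d
        have hval' : Valid (Δ₁ + {Fm.disj A B}) := valid_disj_pair hminΔ.1
        have heq : Δ₁ + {Fm.disj A B} = Γ := by
          apply eq_of_minimal hmin hval'
          rw [hΓ]; exact add_le_add_left hΔ₁ _
        rw [← heq]; exact d'
    · -- all literals
      have hex : ∃ P, Fm.pos P ∈ Γ ∧ Fm.neg P ∈ Γ := by
        by_contra hno
        push_neg at hno
        obtain ⟨C, hC, he⟩ := hmin.1.2 (fun p => decide (Fm.neg p ∈ Γ))
        cases C with
        | pos p =>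
          simp only [Fm.eval, decide_eq_true_eq] at he
          exact hno p hC he
        | neg p =>
          simp only [Fm.eval, Bool.not_eq_true', decide_eq_false_iff_not] at he
          exact he hC
        | conj a b => exact hconj ⟨a, b, hC⟩
        | disj a b => exact hdisj ⟨a, b, hC⟩
      obtain ⟨P, hp, hn⟩ := hex
      have hle : ({Fm.pos P, Fm.neg P} : Multiset Fm) ≤ Γ := by
        rw [Multiset.le_iff_count]
        intro a
        by_cases h1 : a = Fm.pos P
        · subst h1
          have : 1 ≤ Multiset.count (Fm.pos P) Γ := Multiset.one_le_count_iff_mem.mpr hp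
          simpa using this
        · by_cases h2 : a = Fm.neg P
          · subst h2
            have : 1 ≤ Multiset.count (Fm.neg P) Γ := Multiset.one_le_count_iff_mem.mpr hn
            simpa [h1] using this
          · simp [Multiset.insert_eq_cons, Multiset.count_cons, h1, h2]
      have hvalpair : Valid ({Fm.pos P, Fm.neg P} : Multiset Fm) := by
        refine ⟨by simp, fun v => ?_⟩
        cases hv : v P
        · exact ⟨Fm.neg P, by simp, by simp [Fm.eval, hv]⟩
        · exact ⟨Fm.pos P, by simp, by simp [Fm.eval, hv]⟩
      have heq := eq_of_minimal hmin hvalpair hle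
      rw [← heq]
      exact Mp.ax P

theorem stmt_7 (A : Fm) (h : ∀ v : ℕ → Bool, A.eval v = true) :
    Mp ({A} : Multiset Fm) := by
  apply mp_of_minimal (W {A}) _ le_rfl
  constructor
  · exact ⟨by simp, fun v => ⟨A, by simp, h v⟩⟩
  · intro Δ hΔ hval
    have hcard := Multiset.card_lt_card hΔ
    simp only [Multiset.card_singleton] at hcard
    exact hval.1 (Multiset.card_eq_zero.mp (by omega))
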